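/- Let V be a finite nonempty type, w : V → V → ℕ∞, q : ℕ, and let w_q be the augmented graph on V ⊕ Bool. Then: (a) for all u, v : V, dist_{w_q}(inl u, inl v) = min(dist_w(u,v), 2q); (b) for all v : V and b : Bool, dist_{w_q}(inl v, inr b) = q and dist_{w_q}(inr b, inl v) = q; (c) for b ≠ b', dist_{w_q}(inr b, inr b') = 2q. -/

import Mathlib

/-- Weight of a walk starting at `u` and visiting the vertices of `p` in order. -/
def walkWeight {V : Type*} (w : V → V → ℕ∞) : V → List V → ℕ∞
  | _, [] => 0
  | u, x :: xs => w u x + walkWeight w x xs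

/-- Shortest-path distance: infimum of weights of walks from `u` to `v`. -/
noncomputable def gdist {V : Type*} (w : V → V → ℕ∞) (u v : V) : ℕ∞ :=
  ⨅ (p : List V) (_ : (u :: p).getLast (List.cons_ne_nil u p) = v), walkWeight w u p

/-- Eccentricity of a vertex. -/
noncomputable def ecc {V : Type*} (w : V → V → ℕ∞) (v : V) : ℕ∞ :=
  ⨆ u, gdist w v u

/-- Radius. -/
noncomputable def rad {V : Type*} (w : V → V → ℕ∞) : ℕ∞ :=
  ⨅ v, ecc w v

/-- Diameter. -/
noncomputable def diam {V : Type*} (w : V → V → ℕ∞) : ℕ∞ :=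
  ⨆ v, ecc w v

/-- Augmented graph on `V ⊕ Bool`: two extra vertices `x = inr false`, `y = inr true`
connected to every original vertex (in both directions) by edges of weight `q`. -/
def aug {V : Type*} (w : V → V → ℕ∞) (q : ℕ) : V ⊕ Bool → V ⊕ Bool → ℕ∞
  | Sum.inl u, Sum.inl v => w u v
  | Sum.inl _, Sum.inr _ => (q : ℕ∞)
  | Sum.inr _, Sum.inl _ => (q : ℕ∞)
  | Sum.inr _, Sum.inr _ => ⊤


section Aux

variable {V : Type*}

lemma gdist_le (w : V → V → ℕ∞) (u v : V) (p : List V)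
    (h : (u :: p).getLast (List.cons_ne_nil u p) = v) :
    gdist w u v ≤ walkWeight w u p :=
  iInf₂_le p h

lemma gdist_self (w : V → V → ℕ∞) (v : V) : gdist w v v = 0 :=
  le_antisymm (gdist_le w v v [] rfl) zero_le

lemma exists_gdist (w : V → V → ℕ∞) (u v : V) :
    ∃ p, ∃ _h : (u :: p).getLast (List.cons_ne_nil u p) = v,
      walkWeight w u p = gdist w u v := by
  have hne : Nonempty {p : List V // (u :: p).getLast (List.cons_ne_nil u p) = v} :=
    ⟨⟨[v], by simp⟩⟩
  have heq : gdist w u v =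
      ⨅ x : {p : List V // (u :: p).getLast (List.cons_ne_nil u p) = v},
        walkWeight w u x.1 := by
    rw [gdist, iInf_subtype']
  obtain ⟨⟨p, hp⟩, hx⟩ :=
    csInf_mem (Set.range_nonempty
      (fun x : {p : List V // (u :: p).getLast (List.cons_ne_nil u p) = v} =>
        walkWeight w u x.1))
  refine ⟨p, hp, ?_⟩
  rw [heq, ← sInf_range]
  exact hx

lemma gdist_triangle_edge (w : V → V → ℕ∞) (u u' v : V) :
    gdist w u v ≤ w u u' + gdist w u' v := by
  obtain ⟨p, hp, hw⟩ := exists_gdist w u' v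
  rw [← hw]
  refine gdist_le w u v (u' :: p) ?_
  rw [List.getLast_cons (List.cons_ne_nil u' p)]
  exact hp

lemma getLast_cons_inl_map (p : List V) (u : V) :
    (Sum.inl u :: p.map (Sum.inl : V → V ⊕ Bool)).getLast (List.cons_ne_nil _ _)
      = Sum.inl ((u :: p).getLast (List.cons_ne_nil u p)) := by
  induction p generalizing u with
  | nil => rfl
  | cons x xs ih =>
    rw [List.map_cons, List.getLast_cons (List.cons_ne_nil _ _),
      List.getLast_cons (List.cons_ne_nil _ _)]
    exact ih x

lemma walkWeight_map_inl (w : V → V → ℕ∞) (q : ℕ) (p : List V) (u : V) :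
    walkWeight (aug w q) (Sum.inl u) (p.map Sum.inl) = walkWeight w u p := by
  induction p generalizing u with
  | nil => rfl
  | cons x xs ih => simp only [List.map_cons, walkWeight, aug, ih x]

/-- Any walk from an original vertex to an augmented vertex costs at least `q`. -/
lemma weight_to_inr (w : V → V → ℕ∞) (q : ℕ) :
    ∀ (p : List (V ⊕ Bool)) (u : V) (b : Bool),
      (Sum.inl u :: p).getLast (List.cons_ne_nil _ p) = Sum.inr b →
      (q : ℕ∞) ≤ walkWeight (aug w q) (Sum.inl u) p := by
  intro p
  induction p with
  | nil => intro u b h; simp at h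
  | cons x xs ih =>
    intro u b h
    have h' : (x :: xs).getLast (List.cons_ne_nil x xs) = Sum.inr b := by
      rw [← h, List.getLast_cons (List.cons_ne_nil x xs)]
    cases x with
    | inl u' =>
      calc (q : ℕ∞) ≤ walkWeight (aug w q) (Sum.inl u') xs := ih u' b h'
        _ ≤ _ := le_add_self
    | inr b' =>
      show (q : ℕ∞) ≤ (q : ℕ∞) + _
      exact le_self_add

/-- Any walk from an augmented vertex to an original vertex costs at least `q`. -/
lemma weight_from_inr (w : V → V → ℕ∞) (q : ℕ) (p : List (V ⊕ Bool)) (b : Bool) (v : V)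
    (h : (Sum.inr b :: p).getLast (List.cons_ne_nil _ p) = Sum.inl v) :
    (q : ℕ∞) ≤ walkWeight (aug w q) (Sum.inr b) p := by
  cases p with
  | nil => simp at h
  | cons x xs =>
    cases x with
    | inl u' =>
      show (q : ℕ∞) ≤ (q : ℕ∞) + _
      exact le_self_add
    | inr b' =>
      show (q : ℕ∞) ≤ ⊤ + _
      simp

lemma weight_inl_inl (w : V → V → ℕ∞) (q : ℕ) :
    ∀ (p : List (V ⊕ Bool)) (u v : V),
      (Sum.inl u :: p).getLast (List.cons_ne_nil _ p) = Sum.inl v →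
      min (gdist w u v) ((2 * q : ℕ) : ℕ∞) ≤ walkWeight (aug w q) (Sum.inl u) p := by
  intro p
  induction p with
  | nil =>
    intro u v h
    simp only [List.getLast_singleton, Sum.inl.injEq] at h
    subst h
    show min (gdist w u u) _ ≤ 0
    rw [gdist_self]
    exact min_le_left _ _
  | cons x xs ih =>
    intro u v h
    have h' : (x :: xs).getLast (List.cons_ne_nil x xs) = Sum.inl v := by
      rw [← h, List.getLast_cons (List.cons_ne_nil x xs)]
    cases x with
    | inl u' =>
      show min (gdist w u v) _ ≤ w u u' + walkWeight (aug w q) (Sum.inl u') xs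
      have h1 : min (gdist w u v) ((2 * q : ℕ) : ℕ∞) ≤
          w u u' + min (gdist w u' v) ((2 * q : ℕ) : ℕ∞) := by
        rcases min_cases (gdist w u' v) ((2 * q : ℕ) : ℕ∞) with ⟨he, _⟩ | ⟨he, _⟩
        · rw [he]
          exact le_trans (min_le_left _ _) (gdist_triangle_edge w u u' v)
        · rw [he]
          exact le_trans (min_le_right _ _) le_add_self
      exact h1.trans (add_le_add le_rfl (ih u' v h'))
    | inr b =>
      show min (gdist w u v) _ ≤ (q : ℕ∞) + walkWeight (aug w q) (Sum.inr b) xs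
      refine le_trans (min_le_right _ _) ?_
      have : ((2 * q : ℕ) : ℕ∞) = (q : ℕ∞) + (q : ℕ∞) := by
        push_cast; ring
      rw [this]
      exact add_le_add le_rfl (weight_from_inr w q xs b v h')

end Aux

theorem stmt1 {V : Type*} [Fintype V] [Nonempty V] (w : V → V → ℕ∞) (q : ℕ) :
    (∀ u v : V,
      gdist (aug w q) (Sum.inl u) (Sum.inl v) = min (gdist w u v) ((2 * q : ℕ) : ℕ∞)) ∧
    (∀ (v : V) (b : Bool),
      gdist (aug w q) (Sum.inl v) (Sum.inr b) = (q : ℕ∞) ∧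
      gdist (aug w q) (Sum.inr b) (Sum.inl v) = (q : ℕ∞)) ∧
    (∀ b b' : Bool, b ≠ b' →
      gdist (aug w q) (Sum.inr b) (Sum.inr b') = ((2 * q : ℕ) : ℕ∞)) := by
  refine ⟨fun u v => ?_, fun v b => ⟨?_, ?_⟩, fun b b' hbb => ?_⟩
  · apply le_antisymm
    · refine le_min ?_ ?_
      · refine le_iInf₂ fun p hp => ?_
        rw [← walkWeight_map_inl w q p u]
        exact gdist_le _ _ _ (p.map Sum.inl) (by rw [getLast_cons_inl_map]; rw [hp])
      · have := gdist_le (aug w q) (Sum.inl u) (Sum.inl v)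
          [Sum.inr false, Sum.inl v] rfl
        refine le_trans this ?_
        show (q : ℕ∞) + ((q : ℕ∞) + 0) ≤ _
        rw [add_zero]
        have : ((2 * q : ℕ) : ℕ∞) = (q : ℕ∞) + (q : ℕ∞) := by push_cast; ring
        rw [this]
    · exact le_iInf₂ fun p hp => weight_inl_inl w q p u v hp
  · apply le_antisymm
    · have := gdist_le (aug w q) (Sum.inl v) (Sum.inr b) [Sum.inr b] rfl
      refine le_trans this ?_
      show (q : ℕ∞) + 0 ≤ _
      rw [add_zero]
    · exact le_iInf₂ fun p hp => weight_to_inr w q p v b hp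
  · apply le_antisymm
    · have := gdist_le (aug w q) (Sum.inr b) (Sum.inl v) [Sum.inl v] rfl
      refine le_trans this ?_
      show (q : ℕ∞) + 0 ≤ _
      rw [add_zero]
    · exact le_iInf₂ fun p hp => weight_from_inr w q p b v hp
  · obtain ⟨v⟩ := ‹Nonempty V›
    apply le_antisymm
    · have := gdist_le (aug w q) (Sum.inr b) (Sum.inr b')
        [Sum.inl v, Sum.inr b'] rfl
      refine le_trans this ?_
      show (q : ℕ∞) + ((q : ℕ∞) + 0) ≤ _
      rw [add_zero]
      have : ((2 * q : ℕ) : ℕ∞) = (q : ℕ∞) + (q : ℕ∞) := by push_cast; ring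
      rw [this]
    · refine le_iInf₂ fun p hp => ?_
      cases p with
      | nil => simp [Sum.inr.injEq] at hp; exact absurd hp hbb
      | cons x xs =>
        have h' : (x :: xs).getLast (List.cons_ne_nil x xs) = Sum.inr b' := by
          rw [← hp, List.getLast_cons (List.cons_ne_nil x xs)]
        cases x with
        | inl u =>
          show ((2 * q : ℕ) : ℕ∞) ≤ (q : ℕ∞) + walkWeight (aug w q) (Sum.inl u) xs
          have : ((2 * q : ℕ) : ℕ∞) = (q : ℕ∞) + (q : ℕ∞) := by push_cast; ring
          rw [this]
          exact add_le_add le_rfl (weight_to_inr w q xs u b' h')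
        | inr b'' =>
          show _ ≤ ⊤ + _
          simp
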